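/- arXiv:2109.02067 — 3 statements merged into one kernel-verified Lean document; each statement's English description precedes it below -/
import Mathlib

section
/- If i : C → D is a G-equivariant Dwyer map of small G-categories and H ⊆ G is a subgroup, then the induced functor on H-fixed subcategories i^H : C^H → D^H is a Dwyer map. -/
open CategoryTheory

universe u

namespace GGlobal

/-- A strict action of a group (or monoid) `G` on a category `C`, given by a monoid
homomorphism into the endomorphism monoid of `C` in `Cat`. -/
abbrev GAct (G : Type u) [Monoid G] (C : Type u) [Category.{u} C] : Type u :=
  G →* CategoryTheory.End (Cat.of C)

variable {G : Type u} [Group G] {C D : Type u} [Category.{u} C] [Category.{u} D]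

/-- A functor is strictly `G`-equivariant. -/
def EquivFun (ρC : GAct G C) (ρD : GAct G D) (F : C ⥤ D) : Prop :=
  ∀ g : G, ((ρC g).toFunctor : C ⥤ C) ⋙ F = F ⋙ ((ρD g).toFunctor : D ⥤ D)

/-- The `H`-fixed points of a `G`-category: objects fixed by all of `H`. -/
structure Fixed (ρ : GAct G C) (H : Subgroup G) : Type u where
  obj : C
  fixed : ∀ h ∈ H, (((ρ h).toFunctor : C ⥤ C)).obj obj = obj

instance {ρ : GAct G C} {H : Subgroup G} : Category.{u} (Fixed ρ H) where
  Hom x y := { φ : x.obj ⟶ y.obj //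
    ∀ h (hh : h ∈ H), ((ρ h).toFunctor : C ⥤ C).map φ =
      eqToHom (x.fixed h hh) ≫ φ ≫ eqToHom (y.fixed h hh).symm }
  id x := ⟨𝟙 x.obj, by
    intro h hh
    have key : ∀ (a b : C) (p : b = a), 𝟙 b = eqToHom p ≫ 𝟙 a ≫ eqToHom p.symm := by
      intros; subst_vars; simp
    exact ((ρ h).toFunctor.map_id x.obj).trans (key _ _ _)⟩
  comp f g := ⟨f.1 ≫ g.1, by
    intro h hh
    have key : ∀ {a b c a' b' c' : C} (p1 : a' = a) (q1 : b = b') (p2 : b' = b) (q2 : c = c')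
        (f : a ⟶ b) (g : b ⟶ c), (eqToHom p1 ≫ f ≫ eqToHom q1) ≫ eqToHom p2 ≫ g ≫ eqToHom q2 =
          eqToHom p1 ≫ (f ≫ g) ≫ eqToHom q2 := by
      intros; subst_vars; simp
    erw [Functor.map_comp, f.2 h hh, g.2 h hh]
    exact key _ _ _ _ _ _⟩
  id_comp f := Subtype.ext (by simp)
  comp_id f := Subtype.ext (by simp)
  assoc f g h := Subtype.ext (by simp)

/-- The functor induced on `H`-fixed points by a strictly equivariant functor. -/
def FixedFunctor (ρC : GAct G C) (ρD : GAct G D) (i : C ⥤ D) (hi : EquivFun ρC ρD i)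
    (H : Subgroup G) : Fixed ρC H ⥤ Fixed ρD H where
  obj x := ⟨i.obj x.obj, fun h hh => by
    have := Functor.congr_obj (hi h) x.obj
    exact this.symm.trans (congrArg i.obj (x.fixed h hh))⟩
  map {x y} φ := ⟨i.map φ.1, fun h hh => by
    have h2 := Functor.congr_hom (hi h).symm φ.1
    have key : ∀ {a b a' b' : C} {A' B' : D} (φ : a ⟶ b) (ψ : a' ⟶ b') (Φ : A' ⟶ B')
        (p : a' = a) (q : b = b') (e1 : A' = i.obj a') (e2 : i.obj b' = B'),
        ψ = eqToHom p ≫ φ ≫ eqToHom q → Φ = eqToHom e1 ≫ i.map ψ ≫ eqToHom e2 →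
        Φ = eqToHom (e1.trans (congrArg i.obj p)) ≫ i.map φ ≫
          eqToHom ((congrArg i.obj q).trans e2) := by
      intros; subst_vars; simp
    exact key φ.1 _ _ _ _ _ _ (φ.2 h hh) h2⟩
  map_id x := Subtype.ext (by exact i.map_id x.obj)
  map_comp f g := Subtype.ext (by exact i.map_comp f.1 g.1)

/-- A functor is a sieve inclusion: fully faithful, injective on objects, and closed
under precomposition: any morphism of `D` with target in the image lies in the image. -/
structure IsSieve (i : C ⥤ D) : Prop where
  full : i.Full
  faithful : i.Faithful
  injObj : Function.Injective i.obj
  closed : ∀ {c : C} {d : D}, (d ⟶ i.obj c) → ∃ c', i.obj c' = d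

/-- A functor is a cosieve inclusion: fully faithful, injective on objects, and closed
under postcomposition: any morphism of `D` with source in the image lies in the image. -/
structure IsCosieve (i : C ⥤ D) : Prop where
  full : i.Full
  faithful : i.Faithful
  injObj : Function.Injective i.obj
  closed : ∀ {c : C} {d : D}, (i.obj c ⟶ d) → ∃ c', i.obj c' = d

/-- A Dwyer map: a sieve admitting a factorization through a cosieve by a functor
admitting a right adjoint. -/
def IsDwyer (i : C ⥤ D) : Prop :=
  IsSieve i ∧ ∃ (X : Cat.{u, u}) (f : C ⥤ X) (j : X ⥤ D),
    i = f ⋙ j ∧ IsCosieve j ∧ ∃ r : X ⥤ C, Nonempty (f ⊣ r)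

/-- A `G`-equivariant Dwyer map: an equivariant sieve admitting an equivariant
factorization through an equivariant cosieve by an equivariant functor admitting a
`G`-equivariant right adjoint (with equivariant unit and counit). -/
def IsGDwyer (ρC : GAct G C) (ρD : GAct G D) (i : C ⥤ D) : Prop :=
  IsSieve i ∧ EquivFun ρC ρD i ∧
    ∃ (X : Cat.{u, u}) (ρX : GAct G X) (f : C ⥤ X) (j : X ⥤ D),
      i = f ⋙ j ∧ EquivFun ρC ρX f ∧ EquivFun ρX ρD j ∧ IsCosieve j ∧
        ∃ (r : X ⥤ C) (adj : f ⊣ r), EquivFun ρX ρC r ∧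
          (∀ (g : G) (c : C),
            HEq (((ρC g).toFunctor : C ⥤ C).map (adj.unit.app c)) (adj.unit.app (((ρC g).toFunctor : C ⥤ C).obj c))) ∧
          (∀ (g : G) (x : X),
            HEq (((ρX g).toFunctor : X ⥤ X).map (adj.counit.app x)) (adj.counit.app (((ρX g).toFunctor : X ⥤ X).obj x)))

end GGlobal

open GGlobal

namespace GGlobalAux

variable {G : Type u} [Group G] {C D : Type u} [Category.{u} C] [Category.{u} D]

lemma Fixed.ext' {ρ : GAct G C} {H : Subgroup G} :
    ∀ {x y : Fixed ρ H}, x.obj = y.obj → x = y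
  | ⟨_, _⟩, ⟨_, _⟩, rfl => rfl

@[simp] lemma Fixed.comp_val {ρ : GAct G C} {H : Subgroup G} {x y z : Fixed ρ H}
    (f : x ⟶ y) (g : y ⟶ z) : (f ≫ g).1 = f.1 ≫ g.1 := rfl

@[simp] lemma Fixed.id_val {ρ : GAct G C} {H : Subgroup G} (x : Fixed ρ H) :
    (𝟙 x : x ⟶ x).1 = 𝟙 x.obj := rfl

@[simp] lemma FixedFunctor_map_val (ρC : GAct G C) (ρD : GAct G D) (i : C ⥤ D)
    (hi : EquivFun ρC ρD i) (H : Subgroup G) {x y : Fixed ρC H} (φ : x ⟶ y) :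
    ((FixedFunctor ρC ρD i hi H).map φ).1 = i.map φ.1 := rfl

lemma equiv_obj {ρC : GAct G C} {ρD : GAct G D} {i : C ⥤ D} (hi : EquivFun ρC ρD i)
    (g : G) (c : C) : ((ρD g).toFunctor : D ⥤ D).obj (i.obj c) = i.obj (((ρC g).toFunctor : C ⥤ C).obj c) :=
  (Functor.congr_obj (hi g) c).symm

lemma fixedFunctor_isSieve (ρC : GAct G C) (ρD : GAct G D) (i : C ⥤ D)
    (hEquiv : EquivFun ρC ρD i) (hs : IsSieve i) (H : Subgroup G) :
    IsSieve (FixedFunctor ρC ρD i hEquiv H) := by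
  haveI := hs.full
  haveI := hs.faithful
  constructor
  · constructor
    intro x y φ
    refine ⟨⟨i.preimage φ.1, ?_⟩, Subtype.ext (by exact i.map_preimage φ.1)⟩
    intro h hh
    apply i.map_injective
    have hc := Functor.congr_hom (hEquiv h) (i.preimage φ.1)
    erw [Functor.comp_map, Functor.comp_map (F := i), Functor.map_preimage] at hc
    erw [hc, φ.2 h hh]
    erw [Functor.map_comp, Functor.map_comp, Functor.map_preimage, eqToHom_map, eqToHom_map]
    have key : ∀ {a b a' b' a'' b'' : D} (p1 : a'' = a') (p2 : a' = a) (q1 : b = b')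
        (q2 : b' = b'') (p3 : a'' = a) (q3 : b = b'') (f : a ⟶ b),
        eqToHom p1 ≫ (eqToHom p2 ≫ f ≫ eqToHom q1) ≫ eqToHom q2 =
          eqToHom p3 ≫ f ≫ eqToHom q3 := by
      intros; subst_vars; simp
    exact key _ _ _ _ _ _ _
  · exact ⟨fun {x y} φ ψ hh => Subtype.ext (i.map_injective (congrArg Subtype.val hh))⟩
  · exact fun x y hh => Fixed.ext' (hs.injObj (congrArg Fixed.obj hh))
  · intro c d φ
    obtain ⟨c', hc'⟩ := hs.closed φ.1
    refine ⟨⟨c', fun h hh => hs.injObj ?_⟩, Fixed.ext' hc'⟩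
    exact (equiv_obj hEquiv h c').symm.trans (by rw [hc']; exact d.fixed h hh)

lemma fixedFunctor_isCosieve (ρC : GAct G C) (ρD : GAct G D) (i : C ⥤ D)
    (hEquiv : EquivFun ρC ρD i) (hs : IsCosieve i) (H : Subgroup G) :
    IsCosieve (FixedFunctor ρC ρD i hEquiv H) := by
  haveI := hs.full
  haveI := hs.faithful
  constructor
  · constructor
    intro x y φ
    refine ⟨⟨i.preimage φ.1, ?_⟩, Subtype.ext (by exact i.map_preimage φ.1)⟩
    intro h hh
    apply i.map_injective
    have hc := Functor.congr_hom (hEquiv h) (i.preimage φ.1)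
    erw [Functor.comp_map, Functor.comp_map (F := i), Functor.map_preimage] at hc
    erw [hc, φ.2 h hh]
    erw [Functor.map_comp, Functor.map_comp, Functor.map_preimage, eqToHom_map, eqToHom_map]
    have key : ∀ {a b a' b' a'' b'' : D} (p1 : a'' = a') (p2 : a' = a) (q1 : b = b')
        (q2 : b' = b'') (p3 : a'' = a) (q3 : b = b'') (f : a ⟶ b),
        eqToHom p1 ≫ (eqToHom p2 ≫ f ≫ eqToHom q1) ≫ eqToHom q2 =
          eqToHom p3 ≫ f ≫ eqToHom q3 := by
      intros; subst_vars; simp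
    exact key _ _ _ _ _ _ _
  · exact ⟨fun {x y} φ ψ hh => Subtype.ext (i.map_injective (congrArg Subtype.val hh))⟩
  · exact fun x y hh => Fixed.ext' (hs.injObj (congrArg Fixed.obj hh))
  · intro c d φ
    obtain ⟨c', hc'⟩ := hs.closed φ.1
    refine ⟨⟨c', fun h hh => hs.injObj ?_⟩, Fixed.ext' hc'⟩
    exact (equiv_obj hEquiv h c').symm.trans (by rw [hc']; exact d.fixed h hh)

/-- The adjunction induced on fixed points. -/
noncomputable def fixedAdjunction (ρC : GAct G C) (ρX : GAct G D)
    (f : C ⥤ D) (r : D ⥤ C) (adj : f ⊣ r)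
    (hf : EquivFun ρC ρX f) (hr : EquivFun ρX ρC r)
    (hu : ∀ (g : G) (c : C),
      HEq (((ρC g).toFunctor : C ⥤ C).map (adj.unit.app c)) (adj.unit.app (((ρC g).toFunctor : C ⥤ C).obj c)))
    (hcu : ∀ (g : G) (x : D),
      HEq (((ρX g).toFunctor : D ⥤ D).map (adj.counit.app x)) (adj.counit.app (((ρX g).toFunctor : D ⥤ D).obj x)))
    (H : Subgroup G) :
    FixedFunctor ρC ρX f hf H ⊣ FixedFunctor ρX ρC r hr H :=
  Adjunction.mkOfUnitCounit
    { unit :=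
      { app := fun x => ⟨adj.unit.app x.obj, by
          intro h hh
          refine (conj_eqToHom_iff_heq _ _ (x.fixed h hh)
            (((FixedFunctor ρC ρX f hf H ⋙ FixedFunctor ρX ρC r hr H).obj x).fixed h hh)).2 ?_
          refine (hu h x.obj).trans ?_
          rw [x.fixed h hh]
          exact HEq.rfl⟩
        naturality := fun x y φ => Subtype.ext (adj.unit.naturality φ.1) }
      counit :=
      { app := fun x => ⟨adj.counit.app x.obj, by
          intro h hh
          refine (conj_eqToHom_iff_heq _ _
            (((FixedFunctor ρX ρC r hr H ⋙ FixedFunctor ρC ρX f hf H).obj x).fixed h hh)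
            (x.fixed h hh)).2 ?_
          refine (hcu h x.obj).trans ?_
          rw [x.fixed h hh]
          exact HEq.rfl⟩
        naturality := fun x y φ => Subtype.ext (adj.counit.naturality φ.1) }
      left_triangle := by
        ext x
        apply Subtype.ext
        simp
        exact (congrArg (fun k => f.map (adj.unit.app x.obj) ≫ k)
          (Category.id_comp (adj.counit.app (f.obj x.obj)))).trans
          (adj.left_triangle_components x.obj)
      right_triangle := by
        ext x
        apply Subtype.ext
        simp
        exact adj.right_triangle_components x.obj }

end GGlobalAux

open GGlobalAux

/-- If `i : C → D` is a `G`-equivariant Dwyer map of small `G`-categories and `H ⊆ G`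
is a subgroup, then the induced functor `i^H : C^H → D^H` on `H`-fixed subcategories
is a Dwyer map. -/
theorem fixedFunctor_isDwyer
    {G : Type u} [Group G] {C D : Type u} [Category.{u} C] [Category.{u} D]
    (ρC : GAct G C) (ρD : GAct G D) (i : C ⥤ D)
    (hEquiv : EquivFun ρC ρD i) (hDwyer : IsGDwyer ρC ρD i) (H : Subgroup G) :
    IsDwyer (FixedFunctor ρC ρD i hEquiv H) := by
  obtain ⟨hs, -, X, ρX, f, j, hfact, hf, hj, hcos, r, adj, hr, hu, hcu⟩ := hDwyer
  subst hfact
  refine ⟨fixedFunctor_isSieve _ _ _ _ hs H,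
    Cat.of (Fixed ρX H), FixedFunctor ρC ρX f hf H, FixedFunctor ρX ρD j hj H, ?_,
    fixedFunctor_isCosieve _ _ _ _ hcos H,
    FixedFunctor ρX ρC r hr H, ⟨fixedAdjunction ρC ρX f r adj hf hr hu hcu H⟩⟩
  rfl
end

section
/- Let N be a simplicial monoid and X an N-simplicial set. For any subgroup H ⊆ N₀ of the monoid of 0-simplices, the natural map e : X^H → Ex(X^H) ≅ (Ex X)^H agrees with the H-fixed points of the natural transformation e_N : X → Ex_N X, and hence e_N is a levelwise weak equivalence on H-fixed points. -/
open CategoryTheory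
open scoped Topology.Homotopy

namespace GGlobal

/-- The map induced on generalized loops by a continuous map. -/
def genLoopMap {X Y : Type} [TopologicalSpace X] [TopologicalSpace Y] (f : C(X, Y))
    {N : Type} {x : X} (g : Ω^ N X x) : Ω^ N Y (f x) :=
  ⟨f.comp g.1, fun y hy => by
    have := g.2 y hy
    simp only [ContinuousMap.comp_apply, this]⟩

/-- The map induced by a continuous map on homotopy groups. -/
def homotopyGroupMap (N : Type) {X Y : Type} [TopologicalSpace X] [TopologicalSpace Y]
    (f : C(X, Y)) (x : X) : HomotopyGroup N X x → HomotopyGroup N Y (f x) :=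
  Quotient.map (genLoopMap f) (fun _ _ h => Nonempty.map (fun F => F.compContinuousMap f) h)

/-- The map induced by a continuous map on path components. -/
def zerothHomotopyMap {X Y : Type} [TopologicalSpace X] [TopologicalSpace Y]
    (f : C(X, Y)) : ZerothHomotopy X → ZerothHomotopy Y :=
  Quotient.map f (fun _ _ h => Nonempty.map (fun p => p.map f.continuous) h)

/-- A continuous map is a weak homotopy equivalence if it induces a bijection on path
components and on all homotopy groups at all basepoints. -/
def IsWeakHomotopyEquivTop {X Y : Type} [TopologicalSpace X] [TopologicalSpace Y]
    (f : C(X, Y)) : Prop :=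
  Function.Bijective (zerothHomotopyMap f) ∧
    ∀ (n : ℕ) (x : X), Function.Bijective (homotopyGroupMap (Fin (n + 1)) f x)

/-- A map of simplicial sets is a weak homotopy equivalence if its geometric
realization is one. -/
noncomputable def IsWeakHomotopyEquiv {X Y : SSet.{0}} (φ : X ⟶ Y) : Prop :=
  IsWeakHomotopyEquivTop (X := SSet.toTop.obj X) (Y := SSet.toTop.obj Y) (SSet.toTop.map φ).hom

end GGlobal

open CategoryTheory Simplicial

namespace GGlobal

/-- An action of a simplicial monoid `N` (a simplicial object in monoids) on a
simplicial set `X`: levelwise monoid actions compatible with the simplicial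
structure maps. -/
structure SAction (N : SimplexCategoryᵒᵖ ⥤ MonCat.{0}) (X : SSet.{0}) where
  act : ∀ n : SimplexCategoryᵒᵖ, (N.obj n) → X.obj n → X.obj n
  one_act : ∀ n x, act n 1 x = x
  mul_act : ∀ n a b x, act n (a * b) x = act n a (act n b x)
  compat : ∀ {m n : SimplexCategoryᵒᵖ} (φ : m ⟶ n) (a : N.obj m) (x : X.obj m),
    X.map φ (act m a x) = act n (N.map φ a) (X.map φ x)

/-- The unique map from the `0`-th vertex in `SimplexCategoryᵒᵖ`. -/
def toVertex (n : SimplexCategoryᵒᵖ) :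
    (Opposite.op (SimplexCategory.mk 0) : SimplexCategoryᵒᵖ) ⟶ n :=
  (SimplexCategory.const n.unop (SimplexCategory.mk 0) 0).op

variable {N : SimplexCategoryᵒᵖ ⥤ MonCat.{0}} {X : SSet.{0}}

lemma toVertex_comp {m n : SimplexCategoryᵒᵖ} (φ : m ⟶ n) : toVertex m ≫ φ = toVertex n :=
  Quiver.Hom.unop_inj (Subsingleton.elim _ _)

lemma map_toVertex_comp (ρ : SAction N X) {m n : SimplexCategoryᵒᵖ} (φ : m ⟶ n)
    (h : N.obj (Opposite.op (SimplexCategory.mk 0))) :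
    N.map φ (N.map (toVertex m) h) = N.map (toVertex n) h := by
  rw [← toVertex_comp φ, N.map_comp]; rfl

/-- The `H`-fixed points of an `N`-simplicial set, for a submonoid (e.g. a subgroup)
`H` of the monoid of `0`-simplices of `N`, acting on `n`-simplices via the unique map
`[n] → [0]`. -/
def fixedSSet (ρ : SAction N X)
    (H : Submonoid (N.obj (Opposite.op (SimplexCategory.mk 0)))) : SSet.{0} where
  obj n := { x : X.obj n // ∀ h ∈ H, ρ.act n (N.map (toVertex n) h) x = x }
  map {m n} φ := TypeCat.ofHom fun x => ⟨X.map φ x.1, by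
    intro h hh
    have h1 := ρ.compat φ (N.map (toVertex m) h) x.1
    rw [map_toVertex_comp ρ φ h] at h1
    rw [← h1, x.2 h hh]⟩
  map_id n := by
    ext x
    simp
  map_comp φ ψ := by
    ext x
    simp

/-- The inclusion of the fixed points. -/
def fixedIncl (ρ : SAction N X)
    (H : Submonoid (N.obj (Opposite.op (SimplexCategory.mk 0)))) : fixedSSet ρ H ⟶ X where
  app _ := TypeCat.ofHom fun x => x.1
  naturality _ _ _ := rfl

/-- The simplicial endomorphism of `X` given by the action of a `0`-simplex `h`. -/
def actMap (ρ : SAction N X) (h : N.obj (Opposite.op (SimplexCategory.mk 0))) : X ⟶ X where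
  app n := TypeCat.ofHom fun x => ρ.act n (N.map (toVertex n) h) x
  naturality m n φ := by
    ext x
    have h1 := ρ.compat φ (N.map (toVertex m) h) x
    rw [map_toVertex_comp ρ φ h] at h1
    exact h1.symm

/-- The restriction to fixed points of the natural transformation `e : id ⇒ Ex`,
given an `N`-action on `Ex X` such that each `h ∈ N₀` acts by `Ex` of its action on
`X` (this is the action of `Ex_N X`). -/
def eFix (Ex : SSet.{0} ⥤ SSet.{0}) (e : 𝟭 SSet.{0} ⟶ Ex)
    (ρ : SAction N X) (ρ' : SAction N (Ex.obj X))
    (hρ' : ∀ (h : N.obj (Opposite.op (SimplexCategory.mk 0))) (n : SimplexCategoryᵒᵖ)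
      (y : (Ex.obj X).obj n),
      ρ'.act n (N.map (toVertex n) h) y = (Ex.map (actMap ρ h)).app n y)
    (H : Submonoid (N.obj (Opposite.op (SimplexCategory.mk 0)))) :
    fixedSSet ρ H ⟶ fixedSSet ρ' H where
  app n := TypeCat.ofHom fun x => ⟨(e.app X).app n x.1, by
    intro h hh
    rw [hρ' h n ((e.app X).app n x.1)]
    have h4 : (Ex.map (actMap ρ h)).app n ((e.app X).app n x.1) =
        (e.app X).app n ((actMap ρ h).app n x.1) := by
      have h5 := ConcreteCategory.congr_hom (congr_app (e.naturality (actMap ρ h)) n) x.1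
      simpa using h5.symm
    exact h4.trans (congrArg _ (x.2 h hh))⟩
  naturality m n φ := by
    ext x
    have h6 := ConcreteCategory.congr_hom ((e.app X).naturality φ) x.1
    apply Subtype.ext
    first
      | (exact h6)
      | (exact h6.symm)
      | (simp)

end GGlobal

open GGlobal

namespace GGlobal

section Aux
variable {N : SimplexCategoryᵒᵖ ⥤ MonCat.{0}} {X : SSet.{0}}

lemma homotopyGroupMap_comp (N : Type) {X Y Z : Type} [TopologicalSpace X]
    [TopologicalSpace Y] [TopologicalSpace Z] (f : C(X, Y)) (g : C(Y, Z)) (x : X) :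
    homotopyGroupMap N (g.comp f) x =
      homotopyGroupMap N g (f x) ∘ homotopyGroupMap N f x := by
  funext q
  induction q using Quotient.inductionOn with
  | h a => rfl

lemma homotopyGroupMap_id (N : Type) {X : Type} [TopologicalSpace X] (x : X) :
    homotopyGroupMap N (ContinuousMap.id X) x = id := by
  funext q
  induction q using Quotient.inductionOn with
  | h a => exact congrArg Quotient.mk'' (Subtype.ext (ContinuousMap.ext fun _ => rfl))

lemma zerothHomotopyMap_comp {X Y Z : Type} [TopologicalSpace X]
    [TopologicalSpace Y] [TopologicalSpace Z] (f : C(X, Y)) (g : C(Y, Z)) :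
    zerothHomotopyMap (g.comp f) = zerothHomotopyMap g ∘ zerothHomotopyMap f := by
  funext q
  induction q using Quotient.inductionOn with
  | h a => rfl

lemma zerothHomotopyMap_id {X : Type} [TopologicalSpace X] :
    zerothHomotopyMap (ContinuousMap.id X) = id := by
  funext q
  induction q using Quotient.inductionOn with
  | h a => rfl

/-- Transport of homotopy groups along an equality of basepoints. -/
def hgTp (N : Type) {X : Type} [TopologicalSpace X] {y y' : X} (e : y = y') :
    HomotopyGroup N X y → HomotopyGroup N X y' := fun c => e ▸ c

lemma homotopyGroupMap_transport (N : Type) {X Y : Type} [TopologicalSpace X]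
    [TopologicalSpace Y] (f : C(X, Y)) {y y' : X} (e : y = y') (c : HomotopyGroup N X y) :
    homotopyGroupMap N f y' (hgTp N e c) = hgTp N (congrArg f e) (homotopyGroupMap N f y c) := by
  subst e; rfl

lemma homotopyGroupMap_key (N : Type) {Y : Type} [TopologicalSpace Y]
    (k : C(Y, Y)) (hk : k = ContinuousMap.id Y) (x : Y) (a : HomotopyGroup N Y x) :
    hgTp N (ContinuousMap.congr_fun hk x) (homotopyGroupMap N k x a) = a := by
  subst hk
  have : homotopyGroupMap N (ContinuousMap.id Y) x a = a := congrFun (homotopyGroupMap_id N x) a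
  simpa [hgTp] using this

lemma isWeak_of_inverse {Y Z : Type} [TopologicalSpace Y] [TopologicalSpace Z]
    (g : C(Y, Z)) (g' : C(Z, Y)) (h1 : g'.comp g = ContinuousMap.id Y)
    (h2 : g.comp g' = ContinuousMap.id Z) : IsWeakHomotopyEquivTop g := by
  constructor
  · have hc := zerothHomotopyMap_comp g g'
    rw [h1, zerothHomotopyMap_id] at hc
    have hc2 := zerothHomotopyMap_comp g' g
    rw [h2, zerothHomotopyMap_id] at hc2
    exact ⟨Function.LeftInverse.injective (g := zerothHomotopyMap g')
        (fun a => (congrFun hc a).symm),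
      Function.RightInverse.surjective (g := zerothHomotopyMap g')
        (fun a => (congrFun hc2 a).symm)⟩
  · intro n x
    set N := Fin (n + 1) with hN
    have hc := homotopyGroupMap_comp N g g' x
    have hc2 := homotopyGroupMap_comp N g' g (g x)
    have hy : (g'.comp g) x = (ContinuousMap.id Y) x := ContinuousMap.congr_fun h1 x
    constructor
    · intro a b hab
      have h3 : homotopyGroupMap N (g'.comp g) x a = homotopyGroupMap N (g'.comp g) x b := by
        rw [hc]; simp only [Function.comp_apply, hab]
      exact ((homotopyGroupMap_key N _ h1 x a).symm.trans
          (show hgTp N hy (homotopyGroupMap N (g'.comp g) x a)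
            = hgTp N hy (homotopyGroupMap N (g'.comp g) x b) by rw [h3])).trans
          (homotopyGroupMap_key N _ h1 x b)
    · intro b
      refine ⟨hgTp N hy (homotopyGroupMap N g' (g x) b), ?_⟩
      have h4 := homotopyGroupMap_transport N g (e := hy) (homotopyGroupMap N g' (g x) b)
      have h5 : homotopyGroupMap N g ((g'.comp g) x) (homotopyGroupMap N g' (g x) b)
          = homotopyGroupMap N (g.comp g') (g x) b := (congrFun hc2 b).symm
      exact (h4.trans
          (show hgTp N (congrArg g hy) (homotopyGroupMap N g ((g'.comp g) x)
              (homotopyGroupMap N g' (g x) b))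
            = hgTp N (congrArg g hy) (homotopyGroupMap N (g.comp g') (g x) b) by rw [h5])).trans
          (homotopyGroupMap_key N _ h2 (g x) b)

lemma IsWeakHomotopyEquivTop.comp' {X Y Z : Type} [TopologicalSpace X]
    [TopologicalSpace Y] [TopologicalSpace Z] {f : C(X, Y)} {g : C(Y, Z)}
    (hf : IsWeakHomotopyEquivTop f) (hg : IsWeakHomotopyEquivTop g) :
    IsWeakHomotopyEquivTop (g.comp f) := by
  refine ⟨?_, ?_⟩
  · rw [zerothHomotopyMap_comp]
    exact hg.1.comp hf.1
  · intro n x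
    rw [homotopyGroupMap_comp]
    exact (hg.2 n (f x)).comp (hf.2 n x)

-- new material

lemma actMap_one (ρ : SAction N X) : actMap ρ 1 = 𝟙 X := by
  apply NatTrans.ext; funext n; ext x
  show ρ.act n (N.map (toVertex n) 1) x = x
  rw [map_one (ConcreteCategory.hom (N.map (toVertex n)))]
  exact ρ.one_act n x

lemma actMap_mul (ρ : SAction N X) (a b : N.obj (Opposite.op (SimplexCategory.mk 0))) :
    actMap ρ (b * a) = actMap ρ a ≫ actMap ρ b := by
  apply NatTrans.ext; funext n; ext x
  show ρ.act n (N.map (toVertex n) (b * a)) x = _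
  rw [map_mul (ConcreteCategory.hom (N.map (toVertex n)))]
  exact ρ.mul_act n _ _ x

variable (ρ : SAction N X) (H : Submonoid (N.obj (Opposite.op (SimplexCategory.mk 0))))

/-- The action functor from the one-object category of `H`. -/
def actFunctor : SingleObj H ⥤ SSet.{0} where
  obj _ := X
  map {a b} h := actMap ρ ((show ↥H from h) : N.obj (Opposite.op (SimplexCategory.mk 0)))
  map_id _ := actMap_one ρ
  map_comp {a b c} f g :=
    actMap_mul ρ (show ↥H from f) (show ↥H from g)

lemma fixedIncl_actMap (h : N.obj (Opposite.op (SimplexCategory.mk 0))) (hh : h ∈ H) :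
    fixedIncl ρ H ≫ actMap ρ h = fixedIncl ρ H := by
  apply NatTrans.ext; funext n; ext x
  exact x.2 h hh

/-- The cone exhibiting the fixed points as a limit. -/
def fixedCone : Limits.Cone (actFunctor ρ H) where
  pt := fixedSSet ρ H
  π := { app := fun _ => fixedIncl ρ H
         naturality := fun _ _ f => by
           exact (Category.id_comp (fixedIncl ρ H)).trans
             (fixedIncl_actMap ρ H (show ↥H from f) (show ↥H from f).2).symm }

def fixedConeIsLimit : Limits.IsLimit (fixedCone ρ H) where
  lift s :=
    { app := fun n => TypeCat.ofHom fun z => ⟨(s.π.app (SingleObj.star H)).app n z, by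
        intro h hh
        have hw := s.w (show SingleObj.star ↥H ⟶ SingleObj.star ↥H from (⟨h, hh⟩ : ↥H))
        exact ConcreteCategory.congr_hom (congr_app hw n) z⟩
      naturality := fun m n φ => by
        ext z
        apply Subtype.ext
        exact ConcreteCategory.congr_hom ((s.π.app (SingleObj.star H)).naturality φ) z }
  fac s j := rfl
  uniq s m w := by
    apply NatTrans.ext; funext n; ext z
    apply Subtype.ext
    exact ConcreteCategory.congr_hom (congr_app (w (SingleObj.star H)) n) z

variable {Ex : SSet.{0} ⥤ SSet.{0}} (ρ' : SAction N (Ex.obj X))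

section ExPart
variable (hρ' : ∀ (h : N.obj (Opposite.op (SimplexCategory.mk 0))) (n : SimplexCategoryᵒᵖ)
      (y : (Ex.obj X).obj n),
      ρ'.act n (N.map (toVertex n) h) y = (Ex.map (actMap ρ h)).app n y)

include hρ'

lemma exActMap (h : N.obj (Opposite.op (SimplexCategory.mk 0))) :
    Ex.map (actMap ρ h) = actMap ρ' h := by
  apply NatTrans.ext; funext n; ext y
  exact (hρ' h n y).symm

/-- The cone over `(actFunctor ρ H) ⋙ Ex` with point the `ρ'`-fixed points. -/
def fixedCone' : Limits.Cone (actFunctor ρ H ⋙ Ex) where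
  pt := fixedSSet ρ' H
  π := { app := fun _ => fixedIncl ρ' H
         naturality := fun _ _ f => by
           have : (actFunctor ρ H ⋙ Ex).map f = actMap ρ' (show ↥H from f) := by
             show Ex.map (actMap ρ _) = _
             exact exActMap ρ ρ' hρ' _
           simp only [Functor.comp_map, Functor.const_obj_map, Category.id_comp]
           show _ = fixedIncl ρ' H ≫ (actFunctor ρ H ⋙ Ex).map f
           rw [this]
           exact (fixedIncl_actMap ρ' H (show ↥H from f) (show ↥H from f).2).symm }

def fixedCone'IsLimit : Limits.IsLimit (fixedCone' ρ H ρ' hρ') where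
  lift s :=
    { app := fun n => TypeCat.ofHom fun z => ⟨(s.π.app (SingleObj.star H)).app n z, by
        intro h hh
        have hw := s.w (show SingleObj.star ↥H ⟶ SingleObj.star ↥H from (⟨h, hh⟩ : ↥H))
        have h2 : (actFunctor ρ H ⋙ Ex).map
            (show SingleObj.star ↥H ⟶ SingleObj.star ↥H from (⟨h, hh⟩ : ↥H)) =
            actMap ρ' h := exActMap ρ ρ' hρ' h
        rw [h2] at hw
        exact ConcreteCategory.congr_hom (congr_app hw n) z⟩
      naturality := fun m n φ => by
        ext z
        apply Subtype.ext
        exact ConcreteCategory.congr_hom ((s.π.app (SingleObj.star H)).naturality φ) z }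
  fac s j := rfl
  uniq s m w := by
    apply NatTrans.ext; funext n; ext z
    apply Subtype.ext
    exact ConcreteCategory.congr_hom (congr_app (w (SingleObj.star H)) n) z

end ExPart

end Aux
end GGlobal


/-- Let `N` be a simplicial monoid and `X` an `N`-simplicial set, and let `Ex` be a
limit-preserving endofunctor of simplicial sets equipped with a natural transformation
`e : id ⇒ Ex` which is a weak homotopy equivalence on every simplicial set (Kan's
lemma). For any subgroup `H` of the monoid `N₀` of `0`-simplices, the natural map
`e : X^H → Ex(X^H) ≅ (Ex X)^H` agrees with the `H`-fixed points of `e_N : X → Ex_N X`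
(under the canonical comparison map `Ex(X^H) → Ex X`), and hence `e_N` is a levelwise
weak equivalence on `H`-fixed points. -/
theorem eFix_agrees_and_isWeakHomotopyEquiv
    (Ex : SSet.{0} ⥤ SSet.{0}) [Limits.PreservesLimits Ex]
    (e : 𝟭 SSet.{0} ⟶ Ex)
    (hKan : ∀ Y : SSet.{0}, IsWeakHomotopyEquiv (e.app Y))
    (N : SimplexCategoryᵒᵖ ⥤ MonCat.{0}) (X : SSet.{0})
    (ρ : SAction N X) (ρ' : SAction N (Ex.obj X))
    (hρ' : ∀ (h : N.obj (Opposite.op (SimplexCategory.mk 0))) (n : SimplexCategoryᵒᵖ)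
      (y : (Ex.obj X).obj n),
      ρ'.act n (N.map (toVertex n) h) y = (Ex.map (actMap ρ h)).app n y)
    (H : Submonoid (N.obj (Opposite.op (SimplexCategory.mk 0))))
    (hH : ∀ h ∈ H, ∃ h' ∈ H, h * h' = 1 ∧ h' * h = 1) :
    (e.app (fixedSSet ρ H) ≫ Ex.map (fixedIncl ρ H) =
        eFix Ex e ρ ρ' hρ' H ≫ fixedIncl ρ' H) ∧
      IsWeakHomotopyEquiv (eFix Ex e ρ ρ' hρ' H) := by
  have hc := fixedConeIsLimit ρ H
  have hc' := fixedCone'IsLimit ρ H ρ' hρ'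
  have hmap : Limits.IsLimit (Ex.mapCone (fixedCone ρ H)) := Limits.isLimitOfPreserves Ex hc
  let φ : Ex.obj (fixedSSet ρ H) ≅ fixedSSet ρ' H := hmap.conePointUniqueUpToIso hc'
  have hφ : φ.hom ≫ fixedIncl ρ' H = Ex.map (fixedIncl ρ H) :=
    hmap.conePointUniqueUpToIso_hom_comp hc' (SingleObj.star H)
  have conj1 : e.app (fixedSSet ρ H) ≫ Ex.map (fixedIncl ρ H) =
      eFix Ex e ρ ρ' hρ' H ≫ fixedIncl ρ' H := by
    rw [← e.naturality (fixedIncl ρ H)]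
    rfl
  have heq : eFix Ex e ρ ρ' hρ' H = e.app (fixedSSet ρ H) ≫ φ.hom := by
    apply hc'.hom_ext
    intro j
    show _ ≫ fixedIncl ρ' H = _ ≫ fixedIncl ρ' H
    rw [Category.assoc, hφ]
    exact conj1.symm
  refine ⟨conj1, ?_⟩
  show IsWeakHomotopyEquivTop (SSet.toTop.map (eFix Ex e ρ ρ' hρ' H)).hom
  rw [heq, Functor.map_comp, TopCat.hom_comp]
  have h1 : (SSet.toTop.map φ.inv).hom.comp (SSet.toTop.map φ.hom).hom =
      ContinuousMap.id (SSet.toTop.obj (Ex.obj (fixedSSet ρ H))) := by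
    have : SSet.toTop.map φ.hom ≫ SSet.toTop.map φ.inv = 𝟙 _ := by
      rw [← Functor.map_comp, φ.hom_inv_id, CategoryTheory.Functor.map_id]
    exact congrArg TopCat.Hom.hom this
  have h2 : (SSet.toTop.map φ.hom).hom.comp (SSet.toTop.map φ.inv).hom =
      ContinuousMap.id (SSet.toTop.obj (fixedSSet ρ' H)) := by
    have : SSet.toTop.map φ.inv ≫ SSet.toTop.map φ.hom = 𝟙 _ := by
      rw [← Functor.map_comp, φ.inv_hom_id, CategoryTheory.Functor.map_id]
    exact congrArg TopCat.Hom.hom this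
  exact IsWeakHomotopyEquivTop.comp' (hKan (fixedSSet ρ H))
    (isWeak_of_inverse (SSet.toTop.map φ.hom).hom (SSet.toTop.map φ.inv).hom h1 h2)
end

section
/- A tame action of the monoid M of injections ω → ω on a set is uniquely determined by the restricted action of the group of bijections of ω: the forgetful functor from tame M-sets to tame core(M)-sets (nominal sets) is an equivalence of categories. -/
open CategoryTheory

/-- The monoid `M` of all injections `ω → ω` under composition. -/
def InjMonoid : Type := { f : ℕ → ℕ // Function.Injective f }

instance : Monoid InjMonoid where
  one := ⟨id, fun _ _ h => h⟩
  mul u v := ⟨u.1 ∘ v.1, u.2.comp v.2⟩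
  one_mul u := Subtype.ext rfl
  mul_one u := Subtype.ext rfl
  mul_assoc u v w := Subtype.ext rfl

/-- A tame `M`-set: a set with an action of the monoid `M` of injections `ω → ω`,
such that every element has a finite support: the action of `u ∈ M` on it depends
only on the values of `u` on the support. -/
structure TameMSet : Type 1 where
  carrier : Type
  act : InjMonoid → carrier → carrier
  one_act : ∀ x, act 1 x = x
  mul_act : ∀ u v x, act (u * v) x = act u (act v x)
  tame : ∀ x : carrier, ∃ S : Finset ℕ,
    ∀ u v : InjMonoid, (∀ s ∈ S, u.1 s = v.1 s) → act u x = act v x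

instance : Category.{0} TameMSet where
  Hom X Y := { f : X.carrier → Y.carrier // ∀ u x, f (X.act u x) = Y.act u (f x) }
  id X := ⟨id, fun _ _ => rfl⟩
  comp f g := ⟨g.1 ∘ f.1, fun u x => by
    show g.1 (f.1 _) = _
    rw [f.2, g.2]
    rfl⟩
  id_comp f := Subtype.ext rfl
  comp_id f := Subtype.ext rfl
  assoc f g h := Subtype.ext rfl

/-- A nominal set: a set with an action of the group `core(M)` of bijections of `ω`,
such that every element has a finite support. -/
structure NominalSet : Type 1 where
  carrier : Type
  act : Equiv.Perm ℕ → carrier → carrier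
  one_act : ∀ x, act 1 x = x
  mul_act : ∀ u v x, act (u * v) x = act u (act v x)
  tame : ∀ x : carrier, ∃ S : Finset ℕ,
    ∀ u v : Equiv.Perm ℕ, (∀ s ∈ S, u s = v s) → act u x = act v x

instance : Category.{0} NominalSet where
  Hom X Y := { f : X.carrier → Y.carrier // ∀ u x, f (X.act u x) = Y.act u (f x) }
  id X := ⟨id, fun _ _ => rfl⟩
  comp f g := ⟨g.1 ∘ f.1, fun u x => by
    show g.1 (f.1 _) = _
    rw [f.2, g.2]
    rfl⟩
  id_comp f := Subtype.ext rfl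
  comp_id f := Subtype.ext rfl
  assoc f g h := Subtype.ext rfl

/-- The inclusion of the group of bijections of `ω` into the monoid of injections. -/
def permToInj (σ : Equiv.Perm ℕ) : InjMonoid := ⟨σ, σ.injective⟩

lemma permToInj_one : permToInj 1 = 1 := Subtype.ext (funext fun _ => rfl)

lemma permToInj_mul (u v : Equiv.Perm ℕ) :
    permToInj (u * v) = permToInj u * permToInj v := Subtype.ext (funext fun _ => rfl)

/-- The forgetful functor from tame `M`-sets to nominal sets, restricting the action
along the inclusion `core(M) → M` of the group of bijections of `ω`. -/
def forgetTame : TameMSet ⥤ NominalSet where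
  obj X :=
    { carrier := X.carrier
      act := fun σ x => X.act (permToInj σ) x
      one_act := fun x => by
        show X.act (permToInj 1) x = x
        rw [permToInj_one, X.one_act]
      mul_act := fun u v x => by
        show X.act (permToInj (u * v)) x = X.act (permToInj u) (X.act (permToInj v) x)
        rw [permToInj_mul, X.mul_act]
      tame := fun x => by
        obtain ⟨S, hS⟩ := X.tame x
        exact ⟨S, fun u v huv => hS _ _ huv⟩ }
  map f := ⟨f.1, fun σ x => f.2 _ x⟩
  map_id X := Subtype.ext rfl
  map_comp f g := Subtype.ext rfl


noncomputable section AuxExt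

instance (S : Finset ℕ) : Infinite {x : ℕ // ¬ x ∈ S} :=
  (Set.Finite.infinite_compl S.finite_toSet).to_subtype

/-- An arbitrary bijection between the (infinite) complements of two finsets of `ℕ`. -/
noncomputable def complEquiv (S T : Finset ℕ) : {x : ℕ // ¬ x ∈ S} ≃ {x : ℕ // ¬ x ∈ T} :=
  letI := Denumerable.ofEncodableOfInfinite {x : ℕ // ¬ x ∈ S}
  letI := Denumerable.ofEncodableOfInfinite {x : ℕ // ¬ x ∈ T}
  (Denumerable.eqv _).trans (Denumerable.eqv _).symm

/-- Extend an injection `u : ℕ → ℕ`, restricted to a finset `S`, to a permutation of `ℕ`. -/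
noncomputable def extPerm (u : InjMonoid) (S : Finset ℕ) : Equiv.Perm ℕ :=
  Equiv.subtypeCongr
    (Equiv.ofBijective
      (fun x : {x : ℕ // x ∈ S} =>
        (⟨u.1 x.1, Finset.mem_image_of_mem u.1 x.2⟩ : {x : ℕ // x ∈ S.image u.1}))
      ⟨fun a b h => Subtype.ext (u.2 (congrArg Subtype.val h)), fun y => by
        obtain ⟨a, ha, hay⟩ := Finset.mem_image.mp y.2
        exact ⟨⟨a, ha⟩, Subtype.ext hay⟩⟩)
    (complEquiv S (S.image u.1))

lemma extPerm_mem (u : InjMonoid) (S : Finset ℕ) {s : ℕ} (hs : s ∈ S) :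
    extPerm u S s = u.1 s := by
  simp [extPerm, Equiv.subtypeCongr, Equiv.sumCompl, hs]
  rfl

/-- Extend a tame `core(M)`-action to an `M`-action. -/
noncomputable def extAct (X : NominalSet) (u : InjMonoid) (x : X.carrier) : X.carrier :=
  X.act (extPerm u (X.tame x).choose) x

lemma extAct_eq (X : NominalSet) (u : InjMonoid) (x : X.carrier) (S : Finset ℕ)
    (hS : ∀ σ τ : Equiv.Perm ℕ, (∀ s ∈ S, σ s = τ s) → X.act σ x = X.act τ x)
    (σ : Equiv.Perm ℕ) (hσ : ∀ s ∈ S, σ s = u.1 s) :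
    extAct X u x = X.act σ x := by
  have hS0 := (X.tame x).choose_spec
  set S0 := (X.tame x).choose
  have h1 : X.act (extPerm u S0) x = X.act (extPerm u (S0 ∪ S)) x :=
    hS0 _ _ (fun s hs => by
      rw [extPerm_mem u S0 hs, extPerm_mem u _ (Finset.mem_union_left _ hs)])
  have h2 : X.act (extPerm u (S0 ∪ S)) x = X.act σ x :=
    hS _ _ (fun s hs => by
      rw [extPerm_mem u _ (Finset.mem_union_right _ hs), hσ s hs])
  rw [extAct, h1, h2]

lemma extAct_image_support (X : NominalSet) (v : InjMonoid) (x : X.carrier) (S : Finset ℕ)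
    (hS : ∀ σ τ : Equiv.Perm ℕ, (∀ s ∈ S, σ s = τ s) → X.act σ x = X.act τ x)
    (σv : Equiv.Perm ℕ) (hσv : ∀ s ∈ S, σv s = v.1 s) :
    ∀ σ τ : Equiv.Perm ℕ, (∀ s ∈ S.image v.1, σ s = τ s) →
      X.act σ (X.act σv x) = X.act τ (X.act σv x) := by
  intro σ τ h
  rw [← X.mul_act, ← X.mul_act]
  refine hS _ _ (fun s hs => ?_)
  show σ (σv s) = τ (σv s)
  rw [hσv s hs]
  exact h _ (Finset.mem_image_of_mem _ hs)

/-- The extension of a nominal set to a tame `M`-set. -/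
noncomputable def toTame (X : NominalSet) : TameMSet where
  carrier := X.carrier
  act := extAct X
  one_act := fun x => by
    rw [extAct_eq X 1 x (X.tame x).choose (X.tame x).choose_spec 1 (fun s _ => rfl),
      X.one_act]
  mul_act := fun u v x => by
    have hS := (X.tame x).choose_spec
    set S := (X.tame x).choose
    set σv := extPerm v S with hσvdef
    have hσv : ∀ s ∈ S, σv s = v.1 s := fun s hs => extPerm_mem v S hs
    set σu := extPerm u (S.image v.1) with hσudef
    have hσu : ∀ s ∈ S.image v.1, σu s = u.1 s := fun s hs => extPerm_mem u _ hs
    have hvx : extAct X v x = X.act σv x := rfl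
    have hsup := extAct_image_support X v x S hS σv hσv
    have hrhs : extAct X u (extAct X v x) = X.act σu (X.act σv x) := by
      rw [hvx]; exact extAct_eq X u _ _ hsup σu hσu
    have hlhs : extAct X (u * v) x = X.act (σu * σv) x := by
      refine extAct_eq X (u * v) x S hS (σu * σv) (fun s hs => ?_)
      show σu (σv s) = u.1 (v.1 s)
      rw [hσv s hs, hσu _ (Finset.mem_image_of_mem _ hs)]
    rw [hlhs, hrhs, X.mul_act]
  tame := fun x => by
    refine ⟨(X.tame x).choose, fun u v huv => ?_⟩
    have hS := (X.tame x).choose_spec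
    exact hS _ _ (fun s hs => by
      rw [extPerm_mem u _ hs, extPerm_mem v _ hs, huv s hs])

lemma toTame_restrict (X : NominalSet) (σ : Equiv.Perm ℕ) (x : X.carrier) :
    (toTame X).act (permToInj σ) x = X.act σ x :=
  extAct_eq X _ x _ (X.tame x).choose_spec σ (fun _ _ => rfl)

instance : forgetTame.Faithful where
  map_injective {X Y f g} h := Subtype.ext (congrArg (fun (k : forgetTame.obj X ⟶ forgetTame.obj Y) => k.1) h)

instance : forgetTame.Full where
  map_surjective {X Y} f := by
    refine ⟨⟨f.1, fun u x => ?_⟩, Subtype.ext rfl⟩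
    obtain ⟨S, hS⟩ := X.tame x
    obtain ⟨T, hT⟩ := Y.tame (f.1 x)
    set σ := extPerm u (S ∪ T)
    have h1 : X.act u x = X.act (permToInj σ) x :=
      hS u (permToInj σ) (fun s hs => (extPerm_mem u _ (Finset.mem_union_left _ hs)).symm)
    have h2 : Y.act (permToInj σ) (f.1 x) = Y.act u (f.1 x) :=
      hT (permToInj σ) u (fun s hs => extPerm_mem u _ (Finset.mem_union_right _ hs))
    exact (congrArg f.1 h1).trans ((f.2 σ x).trans h2)

instance : forgetTame.EssSurj where
  mem_essImage X :=
    ⟨toTame X, ⟨{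
      hom := ⟨id, fun σ x => toTame_restrict X σ x⟩
      inv := ⟨id, fun σ x => (toTame_restrict X σ x).symm⟩
      hom_inv_id := Subtype.ext rfl
      inv_hom_id := Subtype.ext rfl }⟩⟩

end AuxExt

/-- A tame action of the monoid `M` of injections `ω → ω` is uniquely determined by
the restricted action of the group of bijections of `ω`: the forgetful functor from
tame `M`-sets to nominal sets is an equivalence of categories. -/
theorem forgetTame_isEquivalence : forgetTame.IsEquivalence := {}
end
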